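/- Let r, s be positive integers and let B be the matrix indexed by (r-1)-element subsets of {1,...,r+s} with entries B(S,T) = |S \ T| - 1 (including the diagonal, where B(S,S) = -1). Then B^2 = λ B + η J where λ = -C(r+s-2, r-2), η = s^2*C(r+s-2, r-3) - s*C(r+s-2, r-2) + C(r+s-2, r-1), and J is the all-ones matrix. -/

import Mathlib

/-- The binomial coefficient with integer arguments, equal to 0 when `k < 0` or `k > n`. -/
def intChoose (n k : ℤ) : ℤ := if 0 ≤ k ∧ k ≤ n then Nat.choose n.toNat k.toNat else 0

open Finset

/-- counting supersets of `A` among `k`-subsets of `Fin n`. -/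
lemma count_supersets {n : ℕ} (k : ℕ) (A : Finset (Fin n)) :
    ((((Finset.univ : Finset (Fin n)).powersetCard k).filter (fun U => A ⊆ U)).card : ℤ)
      = intChoose ((n : ℤ) - A.card) ((k : ℤ) - A.card) := by
  have hAn : A.card ≤ n := by simpa using card_le_card (subset_univ A)
  by_cases hAk : A.card ≤ k
  · by_cases hkn : k ≤ n
    · rw [show ((((Finset.univ : Finset (Fin n)).powersetCard k).filter
          (fun U => A ⊆ U)).card) = ((Finset.univ \ A).powersetCard (k - A.card)).card from ?_]
      · rw [card_powersetCard, card_sdiff_of_subset (subset_univ A), card_univ, Fintype.card_fin]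
        unfold intChoose
        rw [if_pos ⟨by omega, by omega⟩]
        have h1 : ((n : ℤ) - A.card).toNat = n - A.card := by omega
        have h2 : ((k : ℤ) - A.card).toNat = k - A.card := by omega
        rw [h1, h2]
      · exact Finset.card_nbij' (fun U => U \ A) (fun V => V ∪ A)
          (by
            intro U hU
            simp only [mem_coe, mem_filter, mem_powersetCard] at hU ⊢
            exact ⟨sdiff_subset_sdiff (subset_univ U) le_rfl,
              by rw [card_sdiff_of_subset hU.2, hU.1.2]⟩)
          (by
            intro V hV
            simp only [mem_coe, mem_filter, mem_powersetCard] at hV ⊢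
            have hd : Disjoint V A := disjoint_of_subset_left hV.1 sdiff_disjoint
            refine ⟨⟨subset_univ _, ?_⟩, subset_union_right⟩
            rw [card_union_of_disjoint hd, hV.2]; omega)
          (by
            intro U hU
            simp only [mem_coe, mem_filter, mem_powersetCard] at hU
            exact sdiff_union_of_subset hU.2)
          (by
            intro V hV
            simp only [mem_coe, mem_powersetCard] at hV
            have hd : Disjoint V A := disjoint_of_subset_left hV.1 sdiff_disjoint
            exact union_sdiff_cancel_right hd)
    · rw [powersetCard_eq_empty.mpr (by simpa [card_univ] using by omega : (univ : Finset (Fin n)).card < k)]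
      unfold intChoose
      rw [if_neg (by omega)]
      simp
  · rw [filter_eq_empty_iff.mpr ?_]
    · unfold intChoose
      rw [if_neg (by omega)]
      simp
    · intro U hU hAU
      rw [mem_powersetCard] at hU
      exact hAk (hU.2 ▸ card_le_card hAU)

lemma intChoose_natCast (m : ℕ) (j : ℤ) :
    intChoose m j = if 0 ≤ j then (m.choose j.toNat : ℤ) else 0 := by
  unfold intChoose
  split_ifs with h1 h2 h2
  · simp
  · exact absurd h1.1 h2
  · push_neg at h1
    simp [Nat.choose_eq_zero_of_lt (show m < j.toNat by omega)]
  · rfl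

lemma intChoose_pascal (m : ℕ) (j : ℤ) :
    intChoose ((m : ℤ) + 1) j = intChoose m (j - 1) + intChoose m j := by
  have : ((m : ℤ) + 1) = ((m + 1 : ℕ) : ℤ) := by push_cast; ring
  rw [this, intChoose_natCast, intChoose_natCast, intChoose_natCast]
  rcases lt_trichotomy j 0 with hj | rfl | hj
  · rw [if_neg (by omega), if_neg (by omega), if_neg (by omega)]; ring
  · rw [if_pos le_rfl, if_neg (by omega), if_pos le_rfl]; simp
  · rw [if_pos (by omega), if_pos (by omega), if_pos (by omega)]
    have h1 : j.toNat = (j - 1).toNat + 1 := by omega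
    rw [h1, Nat.choose_succ_succ]
    push_cast; ring

lemma intChoose_ratio (m : ℕ) (j : ℤ) (hj : 0 ≤ j) :
    j * intChoose m j = ((m : ℤ) - j + 1) * intChoose m (j - 1) := by
  rw [intChoose_natCast, intChoose_natCast]
  rcases eq_or_lt_of_le hj with rfl | hj1
  · rw [if_pos le_rfl, if_neg (by omega)]; ring
  · rw [if_pos hj, if_pos (by omega)]
    have h1 : j.toNat = (j - 1).toNat + 1 := by omega
    by_cases hjm : j ≤ m
    · have key := Nat.choose_succ_right_eq m (j - 1).toNat
      rw [← h1] at key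
      have hcast : ((m - (j-1).toNat : ℕ) : ℤ) = (m : ℤ) - j + 1 := by omega
      have h2 : ((j.toNat : ℕ) : ℤ) = j := by omega
      calc j * (m.choose j.toNat : ℤ) = ((m.choose j.toNat * j.toNat : ℕ) : ℤ) := by
            push_cast [h2]; ring
        _ = ((m.choose (j-1).toNat * (m - (j-1).toNat) : ℕ) : ℤ) := by rw [key]
        _ = ((m : ℤ) - j + 1) * (m.choose (j-1).toNat : ℤ) := by
            rw [Nat.cast_mul, hcast]; ring
    · by_cases hjm1 : j - 1 ≤ m
      · have hj1m : (j - 1).toNat = m := by omega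
        rw [Nat.choose_eq_zero_of_lt (by omega), hj1m, Nat.choose_self]
        simp only [Nat.cast_zero, Nat.cast_one, mul_zero, mul_one]
        omega
      · rw [Nat.choose_eq_zero_of_lt (by omega), Nat.choose_eq_zero_of_lt (by omega)]
        ring

lemma card_inter_eq_sum {n : ℕ} (X U : Finset (Fin n)) :
    ((X ∩ U).card : ℤ) = ∑ x ∈ X, if x ∈ U then (1 : ℤ) else 0 := by
  rw [← Finset.filter_mem_eq_inter, Finset.card_filter]
  push_cast
  rfl

lemma sum_inter_card {n : ℕ} (k : ℕ) (X : Finset (Fin n)) :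
    ∑ U ∈ (Finset.univ : Finset (Fin n)).powersetCard k, ((X ∩ U).card : ℤ)
      = X.card * intChoose ((n : ℤ) - 1) ((k : ℤ) - 1) := by
  simp_rw [card_inter_eq_sum]
  rw [Finset.sum_comm]
  have inner : ∀ x : Fin n, (∑ U ∈ (Finset.univ : Finset (Fin n)).powersetCard k,
      if x ∈ U then (1:ℤ) else 0) = intChoose ((n : ℤ) - 1) ((k : ℤ) - 1) := by
    intro x
    rw [Finset.sum_boole]
    have hfil : Finset.filter (fun U => x ∈ U) ((Finset.univ : Finset (Fin n)).powersetCard k)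
        = Finset.filter (fun U => ({x} : Finset (Fin n)) ⊆ U)
          ((Finset.univ : Finset (Fin n)).powersetCard k) :=
      Finset.filter_congr (fun U _ => by simp)
    rw [hfil, count_supersets, Finset.card_singleton]
    norm_num
  rw [Finset.sum_congr rfl (fun x _ => inner x), Finset.sum_const, nsmul_eq_mul]

lemma sum_inter_mul {n : ℕ} (k : ℕ) (S T : Finset (Fin n)) :
    ∑ U ∈ (Finset.univ : Finset (Fin n)).powersetCard k, (((S ∩ U).card : ℤ) * ((T ∩ U).card : ℤ))
      = ((S ∩ T).card : ℤ) * (intChoose ((n : ℤ) - 1) ((k : ℤ) - 1)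
            - intChoose ((n : ℤ) - 2) ((k : ℤ) - 2))
        + (S.card : ℤ) * (T.card : ℤ) * intChoose ((n : ℤ) - 2) ((k : ℤ) - 2) := by
  set c1 := intChoose ((n : ℤ) - 1) ((k : ℤ) - 1) with hc1
  set c2 := intChoose ((n : ℤ) - 2) ((k : ℤ) - 2) with hc2
  have expand : ∀ U : Finset (Fin n), ((S ∩ U).card : ℤ) * ((T ∩ U).card : ℤ)
      = ∑ x ∈ S, ∑ y ∈ T, (if x ∈ U ∧ y ∈ U then (1:ℤ) else 0) := by
    intro U
    rw [card_inter_eq_sum, card_inter_eq_sum, Finset.sum_mul_sum]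
    refine Finset.sum_congr rfl fun x _ => Finset.sum_congr rfl fun y _ => ?_
    split_ifs with h1 h2 h3 h4 h5 <;> simp_all
  simp_rw [expand]
  rw [Finset.sum_comm]
  rw [Finset.sum_congr rfl (fun x _ => Finset.sum_comm)]
  have inner : ∀ x y : Fin n, (∑ U ∈ (Finset.univ : Finset (Fin n)).powersetCard k,
      if x ∈ U ∧ y ∈ U then (1:ℤ) else 0) = if x = y then c1 else c2 := by
    intro x y
    rw [Finset.sum_boole]
    have hfil : Finset.filter (fun U => x ∈ U ∧ y ∈ U)
          ((Finset.univ : Finset (Fin n)).powersetCard k)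
        = Finset.filter (fun U => ({x, y} : Finset (Fin n)) ⊆ U)
          ((Finset.univ : Finset (Fin n)).powersetCard k) :=
      Finset.filter_congr (fun U _ => by simp [Finset.insert_subset_iff])
    rw [hfil, count_supersets]
    by_cases hxy : x = y
    · subst hxy
      rw [if_pos rfl, hc1]
      norm_num
    · rw [if_neg hxy, Finset.card_insert_of_notMem (by simp [hxy]), Finset.card_singleton, hc2]
      norm_num
  simp_rw [inner]
  have rowsum : ∀ x : Fin n, (∑ y ∈ T, if x = y then c1 else c2)
      = T.card * c2 + (if x ∈ T then c1 - c2 else 0) := by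
    intro x
    have : ∀ y ∈ T, (if x = y then c1 else c2) = c2 + (if x = y then c1 - c2 else 0) := by
      intro y _; split_ifs <;> ring
    rw [Finset.sum_congr rfl this, Finset.sum_add_distrib, Finset.sum_const,
      Finset.sum_ite_eq T x (fun _ => c1 - c2), nsmul_eq_mul]
  simp_rw [rowsum]
  rw [Finset.sum_add_distrib, Finset.sum_const, Finset.sum_ite_mem,
    Finset.sum_const, nsmul_eq_mul, nsmul_eq_mul]
  ring

lemma key_identity (r s : ℕ) (hr : 2 ≤ r) (hs : 1 ≤ s) (S T : Finset (Fin (r + s)))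
    (hS : S.card = r - 1) (hT : T.card = r - 1) :
    ∑ U ∈ (Finset.univ : Finset (Fin (r + s))).powersetCard (r - 1),
        (((S \ U).card : ℤ) - 1) * (((U \ T).card : ℤ) - 1)
      = -(intChoose ((r : ℤ) + s - 2) ((r : ℤ) - 2)) * (((S \ T).card : ℤ) - 1)
        + ((s : ℤ) ^ 2 * intChoose ((r : ℤ) + s - 2) ((r : ℤ) - 3)
            - (s : ℤ) * intChoose ((r : ℤ) + s - 2) ((r : ℤ) - 2)
            + intChoose ((r : ℤ) + s - 2) ((r : ℤ) - 1)) := by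
  set k := r - 1 with hk
  set P := (Finset.univ : Finset (Fin (r + s))).powersetCard k with hP
  set N := intChoose ((r + s : ℕ) : ℤ) (k : ℤ) with hNdef
  set c1 := intChoose (((r + s : ℕ) : ℤ) - 1) ((k : ℤ) - 1) with hc1def
  set c1' := intChoose (((r + s : ℕ) : ℤ) - 1) (k : ℤ) with hc1'def
  set c2 := intChoose (((r + s : ℕ) : ℤ) - 2) ((k : ℤ) - 2) with hc2def
  set c3 := intChoose (((r + s : ℕ) : ℤ) - 2) ((k : ℤ) - 1) with hc3def
  set c4 := intChoose (((r + s : ℕ) : ℤ) - 2) (k : ℤ) with hc4def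
  have ekn1 : (r : ℤ) + s - 2 = ((r + s : ℕ) : ℤ) - 2 := by push_cast; ring
  have ek2 : (r : ℤ) - 2 = (k : ℤ) - 1 := by omega
  have ek3 : (r : ℤ) - 3 = (k : ℤ) - 2 := by omega
  have ek1 : (r : ℤ) - 1 = (k : ℤ) := by omega
  rw [ekn1, ek2, ek3, ek1, ← hc2def, ← hc3def, ← hc4def]
  have step : ∀ U ∈ P, (((S \ U).card : ℤ) - 1) * (((U \ T).card : ℤ) - 1)
      = ((k : ℤ) - 1) * ((k : ℤ) - 1)
        - ((k : ℤ) - 1) * ((S ∩ U).card : ℤ) - ((k : ℤ) - 1) * ((T ∩ U).card : ℤ)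
        + ((S ∩ U).card : ℤ) * ((T ∩ U).card : ℤ) := by
    intro U hU
    rw [Finset.mem_powersetCard] at hU
    have h1 : ((S \ U).card : ℤ) = (k : ℤ) - ((S ∩ U).card : ℤ) := by
      have := Finset.card_sdiff_add_card_inter S U
      omega
    have h2 : ((U \ T).card : ℤ) = (k : ℤ) - ((T ∩ U).card : ℤ) := by
      have := Finset.card_sdiff_add_card_inter U T
      rw [Finset.inter_comm U T] at this
      have hUc : U.card = k := hU.2
      omega
    rw [h1, h2]; ring
  rw [Finset.sum_congr rfl step]
  rw [Finset.sum_add_distrib, Finset.sum_sub_distrib, Finset.sum_sub_distrib,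
    Finset.sum_const, ← Finset.mul_sum, ← Finset.mul_sum,
    sum_inter_card k S, sum_inter_card k T, sum_inter_mul k S T, hS, hT]
  have hPcard : ((P.card : ℤ)) = N := by
    rw [hP, Finset.card_powersetCard, Finset.card_univ, Fintype.card_fin,
      hNdef, intChoose_natCast, if_pos (Int.ofNat_nonneg k)]
    simp
  rw [nsmul_eq_mul, hPcard]
  have en1 : ((r + s - 2 : ℕ) : ℤ) + 1 = ((r + s : ℕ) : ℤ) - 1 := by omega
  have en2 : ((r + s - 2 : ℕ) : ℤ) = ((r + s : ℕ) : ℤ) - 2 := by omega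
  have en0 : ((r + s - 1 : ℕ) : ℤ) + 1 = ((r + s : ℕ) : ℤ) := by omega
  have en00 : ((r + s - 1 : ℕ) : ℤ) = ((r + s : ℕ) : ℤ) - 1 := by omega
  have pN : N = c1 + c1' := by
    have := intChoose_pascal (r + s - 1) (k : ℤ)
    rw [en0, en00] at this
    simpa [hNdef, hc1def, hc1'def] using this
  have pc1 : c1 = c2 + c3 := by
    have := intChoose_pascal (r + s - 2) ((k : ℤ) - 1)
    rw [en1, en2] at this
    have e : (k : ℤ) - 1 - 1 = (k : ℤ) - 2 := by ring
    rw [e] at this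
    simpa [hc1def, hc2def, hc3def] using this
  have pc1' : c1' = c3 + c4 := by
    have := intChoose_pascal (r + s - 2) (k : ℤ)
    rw [en1, en2] at this
    simpa [hc1'def, hc3def, hc4def] using this
  have rat1 : ((k : ℤ) - 1) * c3 = ((s : ℤ) + 1) * c2 := by
    have := intChoose_ratio (r + s - 2) ((k : ℤ) - 1) (by omega)
    rw [en2] at this
    have e1 : ((r + s : ℕ) : ℤ) - 2 - ((k : ℤ) - 1) + 1 = (s : ℤ) + 1 := by
      push_cast; omega
    have e2 : (k : ℤ) - 1 - 1 = (k : ℤ) - 2 := by ring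
    rw [e1, e2] at this
    simpa [hc2def, hc3def] using this
  have rat2 : (k : ℤ) * c4 = (s : ℤ) * c3 := by
    have := intChoose_ratio (r + s - 2) (k : ℤ) (by omega)
    rw [en2] at this
    have e1 : ((r + s : ℕ) : ℤ) - 2 - (k : ℤ) + 1 = (s : ℤ) := by push_cast; omega
    rw [e1] at this
    simpa [hc3def, hc4def] using this
  have hSTd : ((S ∩ T).card : ℤ) = (k : ℤ) - ((S \ T).card : ℤ) := by
    have := Finset.card_sdiff_add_card_inter S T
    omega
  rw [hSTd]
  have ekr : (k : ℤ) = (r : ℤ) - 1 := by omega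
  rw [← hc1def, ← hc2def]
  rw [ekr] at rat1 rat2 ⊢
  linear_combination ((r : ℤ) - 2) ^ 2 * pN + ((r : ℤ) - 2) ^ 2 * pc1'
    + (-(r : ℤ) ^ 2 + 3 * (r : ℤ) - 1 - ((S \ T).card : ℤ)) * pc1
    + ((s : ℤ) - 1) * rat1 + ((r : ℤ) - 3) * rat2


/-- Let `r, s` be positive integers with `r ≥ 2` and let `B` be the matrix indexed by the
`(r-1)`-element subsets of `{1,...,r+s}` with entries `B(S,T) = |S \ T| - 1`
(so `B(S,S) = -1`).  Then `B² = λB + ηJ` where `λ = -C(r+s-2, r-2)` and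
`η = s²C(r+s-2, r-3) - sC(r+s-2, r-2) + C(r+s-2, r-1)`. -/
theorem typeA_matrix_quadratic (r s : ℕ) (hr : 2 ≤ r) (hs : 1 ≤ s)
    (B : Matrix {S : Finset (Fin (r + s)) // S.card = r - 1}
      {S : Finset (Fin (r + s)) // S.card = r - 1} ℝ)
    (hB : ∀ S T, B S T = ((S.1 \ T.1).card : ℝ) - 1) :
    B ^ 2 = (-(intChoose ((r : ℤ) + s - 2) ((r : ℤ) - 2) : ℝ)) • B +
      (((s : ℝ) ^ 2 * (intChoose ((r : ℤ) + s - 2) ((r : ℤ) - 3) : ℝ) -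
          (s : ℝ) * (intChoose ((r : ℤ) + s - 2) ((r : ℤ) - 2) : ℝ) +
          (intChoose ((r : ℤ) + s - 2) ((r : ℤ) - 1) : ℝ))) •
        (Matrix.of fun _ _ => (1 : ℝ)) := by
  ext S T
  rw [pow_two, Matrix.mul_apply]
  simp only [hB, Matrix.add_apply, Matrix.smul_apply, Matrix.of_apply, smul_eq_mul, mul_one]
  have hsum : ∑ U : {S : Finset (Fin (r + s)) // S.card = r - 1},
      (((S.1 \ U.1).card : ℝ) - 1) * (((U.1 \ T.1).card : ℝ) - 1)
      = ∑ U ∈ (Finset.univ : Finset (Fin (r + s))).powersetCard (r - 1),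
        (((S.1 \ U).card : ℝ) - 1) * (((U \ T.1).card : ℝ) - 1) := by
    exact (Finset.sum_subtype
      ((Finset.univ : Finset (Fin (r + s))).powersetCard (r - 1))
      (fun A => by simp [Finset.mem_powersetCard])
      (fun U => (((S.1 \ U).card : ℝ) - 1) * (((U \ T.1).card : ℝ) - 1))).symm
  rw [hsum]
  have h := key_identity r s hr hs S.1 T.1 S.2 T.2
  have h2 := congrArg (fun z : ℤ => (z : ℝ)) h
  push_cast at h2
  linear_combination h2
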